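/- For any fixed integer 1 ≤ k ≤ p and any fixed t ∈ ℝ, the persistence landscape value λ(k, t), viewed as a function (ℝ²)^p → ℝ sending D = ((b_1, d_1), …, (b_p, d_p)) to the k-th largest value among Λ(b_1, d_1, t), …, Λ(b_p, d_p, t), is 1-Lipschitz with respect to the metric d(D, D') = max_{1 ≤ i ≤ p} max(|b_i − b_i'|, |d_i − d_i'|). -/

import Mathlib

/-- The tent function of a persistence diagram point with birth `b` and death `d`,
evaluated at `t`: `Λ(b, d, t) = max(0, min(t − b, d − t))`. -/
noncomputable def tent (b d t : ℝ) : ℝ := max 0 (min (t - b) (d - t))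

/-- The `k`-th largest coordinate of a vector `x ∈ ℝ^n` (for `1 ≤ k ≤ n`), counted with
multiplicity: the entry at position `n - k` of the non-decreasing rearrangement of `x`. -/
noncomputable def kthLargest {n : ℕ} (x : Fin n → ℝ) (k : ℕ)
    (hk : 1 ≤ k) (hkn : k ≤ n) : ℝ :=
  (x ∘ Tuple.sort x) ⟨n - k, by omega⟩

/-- The persistence landscape value `λ(k, t)` of a diagram
`D = ((b_1, d_1), …, (b_p, d_p)) ∈ (ℝ²)^p`: the `k`-th largest value among the tent
functions `Λ(b_i, d_i, t)`, `i = 1, …, p`. -/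
noncomputable def landscape {p : ℕ} (D : Fin p → ℝ × ℝ) (k : ℕ)
    (hk : 1 ≤ k) (hkp : k ≤ p) (t : ℝ) : ℝ :=
  kthLargest (fun i => tent (D i).1 (D i).2 t) k hk hkp

/-- If `x` is pointwise dominated by `y + ε`, the same holds for the sorted rearrangements. -/
lemma sorted_le_of_le {n : ℕ} (x y : Fin n → ℝ) (ε : ℝ) (h : ∀ i, x i ≤ y i + ε)
    (j : Fin n) : (x ∘ Tuple.sort x) j ≤ (y ∘ Tuple.sort y) j + ε := by
  set σ := Tuple.sort x
  set τ := Tuple.sort y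
  have : ∃ i ∈ Finset.Iic j, j ≤ σ⁻¹ (τ i) := by
    by_contra hcon
    push_neg at hcon
    have hsub : (Finset.Iic j).image (fun i => σ⁻¹ (τ i)) ⊆ Finset.Iio j := by
      intro a ha
      simp only [Finset.mem_image] at ha
      obtain ⟨i, hi, rfl⟩ := ha
      exact Finset.mem_Iio.2 (hcon i hi)
    have hcard : ((Finset.Iic j).image (fun i => σ⁻¹ (τ i))).card = (Finset.Iic j).card := by
      apply Finset.card_image_of_injective
      intro a b hab
      simpa using hab
    have h1 := Finset.card_le_card hsub
    rw [hcard] at h1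
    simp [Fin.card_Iic] at h1
  obtain ⟨i, hi, hji⟩ := this
  calc (x ∘ σ) j ≤ (x ∘ σ) (σ⁻¹ (τ i)) := Tuple.monotone_sort x hji
    _ = x (τ i) := by simp
    _ ≤ y (τ i) + ε := h _
    _ ≤ (y ∘ τ) j + ε := add_le_add_left (Tuple.monotone_sort y (Finset.mem_Iic.1 hi)) ε

lemma kthLargest_le_of_le {n : ℕ} (x y : Fin n → ℝ) (ε : ℝ) (h : ∀ i, x i ≤ y i + ε)
    (k : ℕ) (hk : 1 ≤ k) (hkn : k ≤ n) :
    kthLargest x k hk hkn ≤ kthLargest y k hk hkn + ε :=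
  sorted_le_of_le x y ε h _

lemma tent_lipschitz (b d b' d' t : ℝ) :
    |tent b d t - tent b' d' t| ≤ max |b - b'| |d - d'| := by
  unfold tent
  calc |max 0 (min (t - b) (d - t)) - max 0 (min (t - b') (d' - t))|
      ≤ max |(0 : ℝ) - 0| |min (t - b) (d - t) - min (t - b') (d' - t)| :=
        abs_max_sub_max_le_max _ _ _ _
    _ ≤ max |(0:ℝ)| (max |(t - b) - (t - b')| |(d - t) - (d' - t)|) := by
        exact max_le_max (by simp) (abs_min_sub_min_le_max (t - b) (d - t) (t - b') (d' - t))
    _ ≤ max |b - b'| |d - d'| := by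
        rw [show (t - b) - (t - b') = -(b - b') by ring, show (d - t) - (d' - t) = d - d' by ring,
          abs_neg]
        simp [le_max_iff, abs_nonneg]

/-- For fixed `1 ≤ k ≤ p` and `t ∈ ℝ`, the persistence landscape value `λ(k, t)` is a
1-Lipschitz function of the diagram `D ∈ (ℝ²)^p`, with respect to the metric
`d(D, D') = max_{1 ≤ i ≤ p} max(|b_i − b_i'|, |d_i − d_i'|)`. -/
theorem landscape_lipschitz {p : ℕ} (k : ℕ) (hk : 1 ≤ k) (hkp : k ≤ p) (t : ℝ)
    (D D' : Fin p → ℝ × ℝ) :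
    |landscape D k hk hkp t - landscape D' k hk hkp t| ≤
      Finset.univ.sup' ⟨⟨0, by omega⟩, Finset.mem_univ _⟩
        (fun i => max |(D i).1 - (D' i).1| |(D i).2 - (D' i).2|) := by
  set ε := Finset.univ.sup' ⟨⟨0, by omega⟩, Finset.mem_univ _⟩
      (fun i => max |(D i).1 - (D' i).1| |(D i).2 - (D' i).2|) with hε
  have key : ∀ i, |tent (D i).1 (D i).2 t - tent (D' i).1 (D' i).2 t| ≤ ε := fun i =>
    (tent_lipschitz _ _ _ _ t).trans (by rw [hε]; exact Finset.le_sup' (fun i => max |(D i).1 - (D' i).1| |(D i).2 - (D' i).2|) (Finset.mem_univ i))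
  rw [abs_sub_le_iff]
  constructor
  · have := kthLargest_le_of_le (fun i => tent (D i).1 (D i).2 t)
      (fun i => tent (D' i).1 (D' i).2 t) ε
      (fun i => by have := abs_sub_le_iff.1 (key i); linarith [this.1]) k hk hkp
    unfold landscape
    linarith
  · have := kthLargest_le_of_le (fun i => tent (D' i).1 (D' i).2 t)
      (fun i => tent (D i).1 (D i).2 t) ε
      (fun i => by have := abs_sub_le_iff.1 (key i); linarith [this.2]) k hk hkp
    unfold landscape
    linarith
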